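/- Let T̂ ⊆ {1,…,p} satisfy |T̂| ≤ 2s* and ‖(I − Φ_{T̂})Xθ‖² ≤ c s* log p, assume ‖ε‖² ≤ 2n, event E_n holds, p ≥ 3, D ≥ max(2, 4L/β). Then, with C = 2D + (4 + 2c)/β, the stationary probability of T̂ satisfies π(T̂) ≥ e^{−1} · exp(−C s* log p); in particular log(1/π(T̂)) ≤ 1 + C s* log p. -/

import Mathlib

set_option maxHeartbeats 1000000

open scoped BigOperators
open Finset

noncomputable section

/-- Span of the columns `X j`, `j ∈ S`. -/
def colSpan {n p : ℕ} (X : Fin p → EuclideanSpace ℝ (Fin n)) (S : Finset (Fin p)) :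
    Submodule ℝ (EuclideanSpace ℝ (Fin n)) :=
  Submodule.span ℝ (X '' ↑S)

/-- `Φ_S`, the orthogonal projection of ℝ^n onto the span of the columns in `S`. -/
noncomputable def proj {n p : ℕ} (X : Fin p → EuclideanSpace ℝ (Fin n)) (S : Finset (Fin p)) :
    EuclideanSpace ℝ (Fin n) →ₗ[ℝ] EuclideanSpace ℝ (Fin n) :=
  (colSpan X S).subtype ∘ₗ ((colSpan X S).orthogonalProjectionOnto).toLinearMap

/-- Restricted eigenvalue condition: `‖X_S w‖² ≥ n ν ‖w‖²` for all `S` with `|S| ≤ m`. -/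
def RECond {n p : ℕ} (X : Fin p → EuclideanSpace ℝ (Fin n)) (ν : ℝ) (m : ℕ) : Prop :=
  ∀ S : Finset (Fin p), S.card ≤ m → ∀ w : Fin p → ℝ,
    (n : ℝ) * ν * ∑ j ∈ S, w j ^ 2 ≤ ‖∑ j ∈ S, w j • X j‖ ^ 2

/-- The unnormalized weight exp(G(S,Y) − m(S)), where G(S,Y) = ‖Φ_S Y‖²/β and
m(S) = D|S| log p + (2/β) trace(Φ_S) + (4n/β) 1{|S| > 4s}. -/
noncomputable def postWt {n p : ℕ} (X : Fin p → EuclideanSpace ℝ (Fin n))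
    (Y : EuclideanSpace ℝ (Fin n)) (β D : ℝ) (s : ℕ) (S : Finset (Fin p)) : ℝ :=
  Real.exp (‖proj X S Y‖ ^ 2 / β -
    (D * S.card * Real.log p +
      2 * LinearMap.trace ℝ (EuclideanSpace ℝ (Fin n)) (proj X S) / β +
      if 4 * s < S.card then 4 * n / β else 0))

/-- The probability distribution π(S) ∝ exp(G(S,Y) − m(S)) on subsets of {1,…,p}. -/
noncomputable def postPi {n p : ℕ} (X : Fin p → EuclideanSpace ℝ (Fin n))
    (Y : EuclideanSpace ℝ (Fin n)) (β D : ℝ) (s : ℕ) (S : Finset (Fin p)) : ℝ :=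
  postWt X Y β D s S / ∑ S' : Finset (Fin p), postWt X Y β D s S'

namespace Stmt16Aux

variable {n p : ℕ} {X : Fin p → EuclideanSpace ℝ (Fin n)} {S R : Finset (Fin p)}
  {y z : EuclideanSpace ℝ (Fin n)}

lemma proj_mem : proj X S y ∈ colSpan X S := ((colSpan X S).orthogonalProjectionOnto y).2

lemma proj_eq_self (h : y ∈ colSpan X S) : proj X S y = y := by
  have := Submodule.starProjection_eq_self_iff.2 h; exact this

lemma sub_proj_mem_orth (z : EuclideanSpace ℝ (Fin n)) : z - proj X S z ∈ (colSpan X S)ᗮ :=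
  Submodule.sub_starProjection_mem_orthogonal (K := colSpan X S) z

lemma norm_proj_le : ‖proj X S y‖ ≤ ‖y‖ := by
  have h1 := ((colSpan X S).orthogonalProjectionOnto).le_opNorm y
  have h2 := Submodule.orthogonalProjectionOnto_norm_le (colSpan X S)
  calc ‖proj X S y‖ = ‖(colSpan X S).orthogonalProjectionOnto y‖ := rfl
    _ ≤ ‖(colSpan X S).orthogonalProjectionOnto‖ * ‖y‖ := h1
    _ ≤ 1 * ‖y‖ := by nlinarith [norm_nonneg y]
    _ = ‖y‖ := one_mul _

lemma pythagoras : ‖y‖ ^ 2 = ‖proj X S y‖ ^ 2 + ‖y - proj X S y‖ ^ 2 := by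
  have h : (inner ℝ (y - proj X S y) (proj X S y) : ℝ) = 0 := by
    rw [real_inner_comm]; exact sub_proj_mem_orth (X := X) (S := S) y _ proj_mem
  have h2 := norm_add_sq_real (proj X S y) (y - proj X S y)
  rw [real_inner_comm] at h
  simp [h] at h2
  simpa using h2

lemma colSpan_mono (h : S ⊆ R) : colSpan X S ≤ colSpan X R :=
  Submodule.span_mono (Set.image_mono h)

lemma proj_orth (hz : z ∈ (colSpan X S)ᗮ) : proj X S z = 0 := by
  have h := Submodule.orthogonalProjectionOnto_apply_of_mem_orthogonal hz
  simp [proj, h]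

lemma proj_proj (h : S ⊆ R) : proj X S (proj X R y) = proj X S y := by
  have hmem : y - proj X R y ∈ (colSpan X S)ᗮ := by
    rw [Submodule.mem_orthogonal']
    intro v hv
    exact ((Submodule.mem_orthogonal' _ _).1
      (Submodule.sub_starProjection_mem_orthogonal (K := colSpan X R) y) v (colSpan_mono h hv))
  have h0 : proj X S (y - proj X R y) = 0 := proj_orth hmem
  rw [map_sub] at h0
  exact (eq_of_sub_eq_zero h0).symm |>.symm |>.symm

lemma norm_proj_nested (h : S ⊆ R) :
    ‖proj X R y‖ ^ 2 = ‖proj X S y‖ ^ 2 + ‖proj X R y - proj X S y‖ ^ 2 := by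
  have h2 := pythagoras (X := X) (S := S) (y := proj X R y)
  rwa [proj_proj h] at h2

lemma norm_proj_mono (h : S ⊆ R) : ‖proj X S y‖ ^ 2 ≤ ‖proj X R y‖ ^ 2 := by
  have h3 := sq_nonneg ‖proj X R y - proj X S y‖
  rw [norm_proj_nested h]; linarith

lemma trace_proj : LinearMap.trace ℝ (EuclideanSpace ℝ (Fin n)) (proj X S)
    = (Module.finrank ℝ (colSpan X S) : ℝ) := by
  rw [proj, LinearMap.trace_comp_comm']
  have h : ((colSpan X S).orthogonalProjectionOnto).toLinearMap ∘ₗ (colSpan X S).subtype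
      = LinearMap.id := by
    ext x
    simp [Submodule.orthogonalProjectionOnto_mem_subspace_eq_self x]
  rw [h, LinearMap.trace_id]

lemma trace_proj_nonneg : 0 ≤ LinearMap.trace ℝ (EuclideanSpace ℝ (Fin n)) (proj X S) := by
  rw [trace_proj]; positivity

lemma trace_proj_le_card : LinearMap.trace ℝ (EuclideanSpace ℝ (Fin n)) (proj X S)
    ≤ (S.card : ℝ) := by
  classical
  rw [trace_proj]
  have h1 : Module.finrank ℝ (colSpan X S) ≤ (S.image X).card := by
    have h2 : colSpan X S = Submodule.span ℝ (↑(S.image X) : Set (EuclideanSpace ℝ (Fin n))) := by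
      rw [colSpan, Finset.coe_image]
    rw [h2]
    exact finrank_span_finset_le_card _
  exact_mod_cast h1.trans (Finset.card_image_le)

lemma mem_colSpan_repr (h : y ∈ colSpan X S) :
    ∃ w : Fin p → ℝ, y = ∑ j ∈ S, w j • X j := by
  rw [colSpan, Finsupp.mem_span_image_iff_linearCombination] at h
  obtain ⟨l, hl, rfl⟩ := h
  refine ⟨l, ?_⟩
  rw [Finsupp.linearCombination_apply]
  exact Finsupp.sum_of_support_subset l (by exact_mod_cast (Finsupp.mem_supported ℝ l).1 hl)
    _ (by simp)

lemma X_mem_colSpan {j : Fin p} (hj : j ∈ S) : X j ∈ colSpan X S :=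
  Submodule.subset_span ⟨j, by simpa using hj⟩

/-- μ-part: the increment of the projection of μ is controlled by the approximation error. -/
lemma mu_incr (hsub : S ⊆ R) (μ : EuclideanSpace ℝ (Fin n)) :
    ‖proj X R μ - proj X S μ‖ ≤ ‖μ - proj X S μ‖ := by
  have key : proj X R μ - proj X S μ = proj X R (μ - proj X S μ) := by
    rw [map_sub, proj_eq_self (colSpan_mono hsub proj_mem)]
  rw [key]
  exact norm_proj_le

/-- ε-part: event `E_n` plus the RE condition control the noise projection increment. -/
lemma eps_incr {s : ℕ} (hn : 0 < n) {ν L : ℝ} (hν : 0 < ν) (hL : 0 < L)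
    (hRE : RECond X ν (6 * s))
    (ε : EuclideanSpace ℝ (Fin n)) (hlogp : 0 ≤ Real.log p)
    (hE : ∀ S : Finset (Fin p), S.card < 6 * s → ∀ j ∉ S,
      (inner ℝ (X j - proj X S (X j)) ε : ℝ) ^ 2 ≤ (n : ℝ) * L * ν * Real.log p)
    (That : Finset (Fin p)) (hsub : That ⊆ R) (hTc : That.card < 6 * s)
    (hRc : R.card ≤ 6 * s) :
    ‖proj X R ε - proj X That ε‖ ^ 2 ≤ ((R \ That).card : ℝ) * (L * Real.log p) := by
  classical
  set v := proj X R ε - proj X That ε with hv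
  have hvR : v ∈ colSpan X R :=
    Submodule.sub_mem _ proj_mem (colSpan_mono hsub proj_mem)
  have hvT : v ∈ (colSpan X That)ᗮ := by
    have h0 : proj X That v = 0 := by
      rw [hv, map_sub, proj_proj hsub, proj_eq_self (proj_mem (S := That)), sub_self]
    have h1 := sub_proj_mem_orth (S := That) (X := X) v
    rwa [h0, sub_zero] at h1
  have hvε : ‖v‖ ^ 2 = (inner ℝ v ε : ℝ) := by
    have h1 : (inner ℝ v (ε - proj X R ε) : ℝ) = 0 :=
      (sub_proj_mem_orth (S := R) (X := X) ε) v hvR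
    have h2 : (inner ℝ v (proj X That ε) : ℝ) = 0 := by
      rw [real_inner_comm]; exact hvT _ (proj_mem (S := That))
    have h3 : (inner ℝ v (proj X R ε) : ℝ) = inner ℝ v ε := by
      have h5 := inner_sub_right (𝕜 := ℝ) v ε (proj X R ε)
      rw [h1] at h5; linarith [h5]
    have h4 : (inner ℝ v v : ℝ) = inner ℝ v (proj X R ε) - inner ℝ v (proj X That ε) := by
      rw [hv, inner_sub_right]
    rw [← real_inner_self_eq_norm_sq, h4, h2, h3, sub_zero]
  obtain ⟨w, hw⟩ := mem_colSpan_repr (proj_mem (S := R) (y := ε) (X := X))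
  have hvrep : v = ∑ j ∈ R \ That, w j • (X j - proj X That (X j)) := by
    have h5 : v = proj X R ε - proj X That (proj X R ε) := by rw [hv, proj_proj hsub]
    rw [h5, hw, map_sum]
    have h6 : ∑ j ∈ R, w j • X j - ∑ j ∈ R, proj X That (w j • X j)
        = ∑ j ∈ R, w j • (X j - proj X That (X j)) := by
      rw [← Finset.sum_sub_distrib]
      congr 1; ext j; rw [smul_sub, map_smul]
    rw [h6]
    rw [← Finset.sum_sdiff hsub]
    have hz : ∀ j ∈ That, w j • (X j - proj X That (X j)) = 0 := by
      intro j hj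
      rw [proj_eq_self (X_mem_colSpan hj), sub_self, smul_zero]
    rw [Finset.sum_eq_zero hz, add_zero]
  have hCS : (inner ℝ v ε : ℝ) ^ 2 ≤ (∑ j ∈ R \ That, w j ^ 2) *
      (((R \ That).card : ℝ) * ((n : ℝ) * L * ν * Real.log p)) := by
    have hsum : (inner ℝ v ε : ℝ) = ∑ j ∈ R \ That, w j * inner ℝ (X j - proj X That (X j)) ε := by
      rw [hvrep, sum_inner]
      congr 1; ext j; rw [real_inner_smul_left]
    rw [hsum]
    calc (∑ j ∈ R \ That, w j * inner ℝ (X j - proj X That (X j)) ε) ^ 2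
        ≤ (∑ j ∈ R \ That, w j ^ 2) *
          (∑ j ∈ R \ That, (inner ℝ (X j - proj X That (X j)) ε : ℝ) ^ 2) :=
          Finset.sum_mul_sq_le_sq_mul_sq _ _ _
      _ ≤ (∑ j ∈ R \ That, w j ^ 2) *
          (((R \ That).card : ℝ) * ((n : ℝ) * L * ν * Real.log p)) := by
          apply mul_le_mul_of_nonneg_left _ (by positivity)
          calc (∑ j ∈ R \ That, (inner ℝ (X j - proj X That (X j)) ε : ℝ) ^ 2)
              ≤ ∑ _j ∈ R \ That, (n : ℝ) * L * ν * Real.log p := by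
                apply Finset.sum_le_sum
                intro j hj
                exact hE That hTc j (fun hmem => (Finset.mem_sdiff.1 hj).2 hmem)
            _ = ((R \ That).card : ℝ) * ((n : ℝ) * L * ν * Real.log p) := by
                rw [Finset.sum_const, nsmul_eq_mul]
  have hRE' : (n : ℝ) * ν * (∑ j ∈ R \ That, w j ^ 2) ≤ ‖v‖ ^ 2 := by
    have hq : proj X That (∑ j ∈ R \ That, w j • X j) ∈ colSpan X That := proj_mem
    obtain ⟨a, ha⟩ := mem_colSpan_repr hq
    set u : Fin p → ℝ := fun j => if j ∈ That then -a j else w j with hu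
    have hvrep2 : v = ∑ j ∈ R, u j • X j := by
      have hsplit : ∑ j ∈ R, u j • X j
          = ∑ j ∈ R \ That, u j • X j + ∑ j ∈ That, u j • X j :=
        (Finset.sum_sdiff hsub).symm
      have h6 : ∑ j ∈ R \ That, u j • X j = ∑ j ∈ R \ That, w j • X j := by
        apply Finset.sum_congr rfl
        intro j hj
        rw [hu]; simp [(Finset.mem_sdiff.1 hj).2]
      have h7 : ∑ j ∈ That, u j • X j = -∑ j ∈ That, a j • X j := by
        rw [← Finset.sum_neg_distrib]
        apply Finset.sum_congr rfl
        intro j hj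
        rw [hu]; simp [hj, neg_smul]
      rw [hsplit, h6, h7, ← ha]
      have h8 : v = ∑ j ∈ R \ That, w j • X j - proj X That (∑ j ∈ R \ That, w j • X j) := by
        rw [hvrep, map_sum, ← Finset.sum_sub_distrib]
        congr 1; ext j; rw [smul_sub, map_smul]
      rw [h8]; abel
    have h9 := hRE R hRc u
    rw [← hvrep2] at h9
    refine le_trans (mul_le_mul_of_nonneg_left ?_ (by positivity)) h9
    rw [← Finset.sum_sdiff hsub (f := fun j => u j ^ 2)]
    have h8 : ∑ j ∈ R \ That, u j ^ 2 = ∑ j ∈ R \ That, w j ^ 2 := by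
      apply Finset.sum_congr rfl
      intro j hj
      rw [hu]; simp [(Finset.mem_sdiff.1 hj).2]
    rw [h8]
    have h10 : (0:ℝ) ≤ ∑ j ∈ That, u j ^ 2 := by positivity
    linarith
  have hnonneg : (0:ℝ) ≤ ((R \ That).card : ℝ) * (L * Real.log p) :=
    mul_nonneg (Nat.cast_nonneg _) (mul_nonneg hL.le hlogp)
  have hnonneg2 : (0:ℝ) ≤ ((R \ That).card : ℝ) * ((n : ℝ) * L * ν * Real.log p) :=
    mul_nonneg (Nat.cast_nonneg _) (mul_nonneg (by positivity) hlogp)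
  by_cases hv0 : ‖v‖ = 0
  · rw [hv0]; simpa using hnonneg
  · have hvpos : 0 < ‖v‖ ^ 2 := by positivity
    have hnν : (0:ℝ) < (n : ℝ) * ν := by positivity
    have hw2 : (∑ j ∈ R \ That, w j ^ 2) ≤ ‖v‖ ^ 2 / ((n : ℝ) * ν) := by
      rw [le_div_iff₀ hnν]; linarith [hRE']
    have h9 : (‖v‖ ^ 2) ^ 2 ≤ (‖v‖ ^ 2 / ((n : ℝ) * ν)) *
        (((R \ That).card : ℝ) * ((n : ℝ) * L * ν * Real.log p)) := by
      rw [← hvε] at hCS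
      exact le_trans hCS (mul_le_mul_of_nonneg_right hw2 hnonneg2)
    rw [div_mul_eq_mul_div, le_div_iff₀ hnν] at h9
    nlinarith [h9, mul_pos hvpos hnν, hvpos, hnν]

/-- Sum of `(1/p)^|S|` over all subsets is `(1 + 1/p)^p ≤ e`. -/
lemma sum_pow_card_le (hp : 0 < p) :
    ∑ S : Finset (Fin p), (1 / (p:ℝ)) ^ S.card ≤ Real.exp 1 := by
  classical
  have h1 : ∑ S : Finset (Fin p), (1 / (p:ℝ)) ^ S.card = (1 / (p:ℝ) + 1) ^ p := by
    have h2 := Finset.prod_add (fun _ : Fin p => 1 / (p:ℝ)) (fun _ => 1) Finset.univ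
    simp only [Finset.prod_const, Finset.prod_const_one, mul_one, one_pow,
      Finset.card_univ, Fintype.card_fin] at h2
    rw [h2, ← Finset.powerset_univ]
  rw [h1]
  have h3 : (1 / (p:ℝ) + 1) ^ p ≤ (Real.exp (1 / p)) ^ p := by
    apply pow_le_pow_left₀ (by positivity)
    exact Real.add_one_le_exp _
  refine h3.trans ?_
  rw [← Real.exp_nat_mul]
  rw [mul_one_div, div_self (by positivity : (p:ℝ) ≠ 0)]

end Stmt16Aux
theorem stmt16 {n p s : ℕ} (hn : 0 < n) (hp : 3 ≤ p) (hs : 0 < s) (hsp : 6 * s ≤ p)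
    (X : Fin p → EuclideanSpace ℝ (Fin n))
    (hX : ∀ j, ‖X j‖ = Real.sqrt n)
    {ν : ℝ} (hν : 0 < ν) (hRE : RECond X ν (6 * s))
    (θ : Fin p → ℝ) (T : Finset (Fin p)) (hT : T = Finset.univ.filter fun j => θ j ≠ 0)
    (hTcard : T.card = s)
    (ε Y : EuclideanSpace ℝ (Fin n)) (hY : Y = (∑ j, θ j • X j) + ε)
    (β D c L : ℝ) (hβ : 0 < β) (hc : 0 < c) (hL : 0 < L)
    (hD : max 2 (4 * L / β) ≤ D)
    (That : Finset (Fin p)) (hThatcard : That.card ≤ 2 * s)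
    (hThatrisk : ‖(∑ j, θ j • X j) - proj X That (∑ j, θ j • X j)‖ ^ 2 ≤
      c * s * Real.log p)
    (hF : ‖ε‖ ^ 2 ≤ 2 * n)
    (hE : ∀ S : Finset (Fin p), S.card < 6 * s → ∀ j ∉ S,
      (inner ℝ (X j - proj X S (X j)) ε : ℝ) ^ 2 ≤ (n : ℝ) * L * ν * Real.log p) :
    Real.exp (-1) * Real.exp (-(2 * D + (4 + 2 * c) / β) * s * Real.log p) ≤
      postPi X Y β D s That ∧
    Real.log (1 / postPi X Y β D s That) ≤
      1 + (2 * D + (4 + 2 * c) / β) * s * Real.log p := by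
  classical
  open Stmt16Aux in
  have hppos : 0 < p := by omega
  set μ : EuclideanSpace ℝ (Fin n) := ∑ j, θ j • X j with hμ
  set lp := Real.log p with hlp
  have hlp1 : 1 ≤ lp := by
    rw [hlp]
    have h3 : (3:ℝ) ≤ (p:ℝ) := by exact_mod_cast hp
    calc (1:ℝ) ≤ Real.log 3 := by
          rw [Real.le_log_iff_exp_le (by norm_num)]
          exact Real.exp_one_lt_d9.le.trans (by norm_num)
      _ ≤ Real.log p := Real.log_le_log (by norm_num) h3
  have hlp0 : (0:ℝ) ≤ lp := by linarith
  have hD2 : (2:ℝ) ≤ D := le_trans (le_max_left _ _) hD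
  have hDL : 4 * L ≤ D * β := by
    have h4 := le_trans (le_max_right _ _) hD
    rw [div_le_iff₀ hβ] at h4; linarith
  have hDpos : (0:ℝ) < D := by linarith
  have hTc6 : That.card < 6 * s := by omega
  have hcoef : 2 * L + β ≤ D * β := by nlinarith
  set C := 2 * D + (4 + 2 * c) / β with hC
  have hσ1 : (1:ℝ) ≤ (s:ℝ) := by exact_mod_cast hs
  have hTcast : ((That.card :ℕ) : ℝ) ≤ 2 * (s:ℝ) := by exact_mod_cast hThatcard
  -- key per-subset bound
  have key : ∀ S : Finset (Fin p),
      postWt X Y β D s S ≤ postWt X Y β D s That * Real.exp ((C * s - S.card) * lp) := by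
    intro S
    rw [postWt, postWt, ← Real.exp_add, Real.exp_le_exp]
    have htrS : (0:ℝ) ≤ LinearMap.trace ℝ (EuclideanSpace ℝ (Fin n)) (proj X S) :=
      Stmt16Aux.trace_proj_nonneg
    have htrT : LinearMap.trace ℝ (EuclideanSpace ℝ (Fin n)) (proj X That) ≤ (That.card : ℝ) :=
      Stmt16Aux.trace_proj_le_card
    set trS := LinearMap.trace ℝ (EuclideanSpace ℝ (Fin n)) (proj X S)
    set trT := LinearMap.trace ℝ (EuclideanSpace ℝ (Fin n)) (proj X That)
    rw [if_neg (by omega : ¬ 4 * s < That.card)]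
    by_cases hcase : S.card ≤ 4 * s
    · -- small case
      set R := S ∪ That with hR
      have hSR : S ⊆ R := Finset.subset_union_left
      have hTR : That ⊆ R := Finset.subset_union_right
      have hRc : R.card ≤ 6 * s := le_trans (Finset.card_union_le _ _) (by omega)
      have hkcard : ((R \ That).card : ℝ) ≤ (S.card : ℝ) := by
        have h5 : R \ That ⊆ S := by
          intro x hx
          rcases Finset.mem_sdiff.1 hx with ⟨hx1, hx2⟩
          rcases Finset.mem_union.1 hx1 with h | h
          · exact h
          · exact absurd h hx2
        exact_mod_cast Finset.card_le_card h5
      have hGmu : ‖proj X R μ - proj X That μ‖ ^ 2 ≤ c * s * lp := by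
        have h6 := Stmt16Aux.mu_incr (X := X) hTR μ
        nlinarith [norm_nonneg (proj X R μ - proj X That μ), hThatrisk,
          norm_nonneg (μ - proj X That μ)]
      have hGeps : ‖proj X R ε - proj X That ε‖ ^ 2 ≤ (S.card : ℝ) * (L * lp) := by
        refine le_trans (Stmt16Aux.eps_incr hn hν hL hRE ε hlp0 hE That hTR hTc6 hRc) ?_
        exact mul_le_mul_of_nonneg_right hkcard (mul_nonneg hL.le hlp0)
      have hsplit : proj X R Y - proj X That Y
          = (proj X R μ - proj X That μ) + (proj X R ε - proj X That ε) := by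
        rw [hY, map_add, map_add]; abel
      have hvsq : ‖proj X R Y - proj X That Y‖ ^ 2
          ≤ 2 * (c * s * lp) + 2 * ((S.card : ℝ) * (L * lp)) := by
        rw [hsplit]
        have h7 := norm_add_le (proj X R μ - proj X That μ) (proj X R ε - proj X That ε)
        nlinarith [sq_nonneg (‖proj X R μ - proj X That μ‖ - ‖proj X R ε - proj X That ε‖),
          norm_nonneg (proj X R μ - proj X That μ),
          norm_nonneg (proj X R ε - proj X That ε), hGmu, hGeps, h7,
          norm_nonneg (proj X R μ - proj X That μ + (proj X R ε - proj X That ε))]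
      have hG : ‖proj X S Y‖ ^ 2
          ≤ ‖proj X That Y‖ ^ 2 + 2 * (c * s * lp) + 2 * ((S.card : ℝ) * (L * lp)) := by
        have h1 : ‖proj X S Y‖ ^ 2 ≤ ‖proj X R Y‖ ^ 2 := Stmt16Aux.norm_proj_mono hSR
        have h2 := Stmt16Aux.norm_proj_nested (X := X) (y := Y) hTR
        linarith
      rw [if_neg (by omega : ¬ 4 * s < S.card)]
      rw [← sub_nonneg]
      have hacast : ((S.card:ℕ):ℝ) ≤ 4 * (s:ℝ) := by exact_mod_cast hcase
      have expand : ‖proj X That Y‖ ^ 2 / β -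
            (D * That.card * lp + 2 * trT / β + 0) + (C * s - S.card) * lp -
            (‖proj X S Y‖ ^ 2 / β - (D * S.card * lp + 2 * trS / β + 0))
          = (‖proj X That Y‖ ^ 2 + 2 * (c * s * lp) + 2 * ((S.card : ℝ) * (L * lp))
              - ‖proj X S Y‖ ^ 2) / β
            + (2 * ((2:ℝ) * s) - 2 * trT) / β + 4 * ((s:ℝ) * (lp - 1)) / β
            + D * (2 * (s:ℝ) - That.card) * lp
            + ((D * β - β - 2 * L) / β) * (S.card : ℝ) * lp
            + 2 * trS / β := by
        rw [hC]
        field_simp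
        ring
      rw [expand]
      have t1 : (0:ℝ) ≤ (‖proj X That Y‖ ^ 2 + 2 * (c * s * lp)
          + 2 * ((S.card : ℝ) * (L * lp)) - ‖proj X S Y‖ ^ 2) / β := by
        apply div_nonneg _ hβ.le; linarith
      have t2 : (0:ℝ) ≤ (2 * ((2:ℝ) * s) - 2 * trT) / β := by
        apply div_nonneg _ hβ.le; linarith
      have t3 : (0:ℝ) ≤ 4 * ((s:ℝ) * (lp - 1)) / β := by
        apply div_nonneg _ hβ.le
        have : (0:ℝ) ≤ (s:ℝ) * (lp - 1) := mul_nonneg (by linarith) (by linarith)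
        linarith
      have t4 : (0:ℝ) ≤ D * (2 * (s:ℝ) - That.card) * lp :=
        mul_nonneg (mul_nonneg hDpos.le (by linarith)) hlp0
      have t5 : (0:ℝ) ≤ ((D * β - β - 2 * L) / β) * (S.card : ℝ) * lp := by
        apply mul_nonneg (mul_nonneg _ (Nat.cast_nonneg _)) hlp0
        apply div_nonneg _ hβ.le; linarith
      have t6 : (0:ℝ) ≤ 2 * trS / β := by positivity
      linarith
    · -- large case
      push_neg at hcase
      have hGmu2 : ‖μ - proj X That μ‖ ^ 2 ≤ c * s * lp := hThatrisk
      have hGeps2 : ‖ε - proj X That ε‖ ^ 2 ≤ 2 * (n:ℝ) := by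
        have h8 := Stmt16Aux.pythagoras (X := X) (S := That) (y := ε)
        nlinarith [sq_nonneg ‖proj X That ε‖]
      have hsplit2 : Y - proj X That Y
          = (μ - proj X That μ) + (ε - proj X That ε) := by
        rw [hY, map_add]; abel
      have hvsq2 : ‖Y - proj X That Y‖ ^ 2 ≤ 2 * (c * s * lp) + 2 * (2 * (n:ℝ)) := by
        rw [hsplit2]
        have h7 := norm_add_le (μ - proj X That μ) (ε - proj X That ε)
        nlinarith [sq_nonneg (‖μ - proj X That μ‖ - ‖ε - proj X That ε‖),
          norm_nonneg (μ - proj X That μ), norm_nonneg (ε - proj X That ε),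
          norm_nonneg (μ - proj X That μ + (ε - proj X That ε))]
      have hG2 : ‖proj X S Y‖ ^ 2
          ≤ ‖proj X That Y‖ ^ 2 + 2 * (c * s * lp) + 4 * (n:ℝ) := by
        have h1 : ‖proj X S Y‖ ^ 2 ≤ ‖Y‖ ^ 2 := by
          have := Stmt16Aux.norm_proj_le (X := X) (S := S) (y := Y)
          nlinarith [norm_nonneg (proj X S Y), norm_nonneg Y]
        have h2 := Stmt16Aux.pythagoras (X := X) (S := That) (y := Y)
        linarith
      rw [if_pos hcase]
      rw [← sub_nonneg]
      have hacast : 4 * (s:ℝ) ≤ ((S.card:ℕ):ℝ) := by exact_mod_cast hcase.le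
      have expand : ‖proj X That Y‖ ^ 2 / β -
            (D * That.card * lp + 2 * trT / β + 0) + (C * s - S.card) * lp -
            (‖proj X S Y‖ ^ 2 / β - (D * S.card * lp + 2 * trS / β + 4 * n / β))
          = (‖proj X That Y‖ ^ 2 + 2 * (c * s * lp) + 4 * (n:ℝ)
              - ‖proj X S Y‖ ^ 2) / β
            + (2 * ((2:ℝ) * s) - 2 * trT) / β + 4 * ((s:ℝ) * (lp - 1)) / β
            + D * (2 * (s:ℝ) - That.card) * lp
            + (D - 1) * (S.card : ℝ) * lp
            + 2 * trS / β := by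
        rw [hC]
        field_simp
        ring
      rw [expand]
      have t1 : (0:ℝ) ≤ (‖proj X That Y‖ ^ 2 + 2 * (c * s * lp) + 4 * (n:ℝ)
          - ‖proj X S Y‖ ^ 2) / β := by
        apply div_nonneg _ hβ.le; linarith
      have t2 : (0:ℝ) ≤ (2 * ((2:ℝ) * s) - 2 * trT) / β := by
        apply div_nonneg _ hβ.le; linarith
      have t3 : (0:ℝ) ≤ 4 * ((s:ℝ) * (lp - 1)) / β := by
        apply div_nonneg _ hβ.le
        have : (0:ℝ) ≤ (s:ℝ) * (lp - 1) := mul_nonneg (by linarith) (by linarith)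
        linarith
      have t4 : (0:ℝ) ≤ D * (2 * (s:ℝ) - That.card) * lp :=
        mul_nonneg (mul_nonneg hDpos.le (by linarith)) hlp0
      have t5 : (0:ℝ) ≤ (D - 1) * (S.card : ℝ) * lp :=
        mul_nonneg (mul_nonneg (by linarith) (Nat.cast_nonneg _)) hlp0
      have t6 : (0:ℝ) ≤ 2 * trS / β := by positivity
      linarith
  -- sum bound
  set wT := postWt X Y β D s That with hwT
  have hwTpos : 0 < wT := Real.exp_pos _
  set Z := ∑ S' : Finset (Fin p), postWt X Y β D s S' with hZ
  have hZpos : 0 < Z :=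
    Finset.sum_pos (fun S' _ => Real.exp_pos _) Finset.univ_nonempty
  have hexpand : ∀ S' : Finset (Fin p),
      Real.exp ((C * s - S'.card) * lp) = Real.exp (C * s * lp) * (1 / (p:ℝ)) ^ S'.card := by
    intro S'
    have h1 : Real.exp ((S'.card : ℝ) * lp) = (p:ℝ) ^ S'.card := by
      rw [Real.exp_nat_mul, hlp, Real.exp_log (by exact_mod_cast hppos)]
    rw [sub_mul, Real.exp_sub, h1, div_eq_mul_inv, ← inv_pow, one_div]
  have hZle : Z ≤ wT * Real.exp (C * s * lp) * Real.exp 1 := by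
    calc Z ≤ ∑ S' : Finset (Fin p), wT * Real.exp ((C * s - S'.card) * lp) :=
          Finset.sum_le_sum (fun S' _ => key S')
      _ = wT * Real.exp (C * s * lp) * ∑ S' : Finset (Fin p), (1 / (p:ℝ)) ^ S'.card := by
          simp_rw [hexpand]
          rw [← Finset.mul_sum, ← Finset.mul_sum]
          ring
      _ ≤ wT * Real.exp (C * s * lp) * Real.exp 1 := by
          apply mul_le_mul_of_nonneg_left (Stmt16Aux.sum_pow_card_le hppos) (by positivity)
  have hmain : Real.exp (-1) * Real.exp (-(C * s * lp)) ≤ postPi X Y β D s That := by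
    have h1 : wT / (wT * Real.exp (C * s * lp) * Real.exp 1) ≤ wT / Z := by
      apply div_le_div_of_nonneg_left hwTpos.le hZpos hZle
    have h2 : wT / (wT * Real.exp (C * s * lp) * Real.exp 1)
        = Real.exp (-1) * Real.exp (-(C * s * lp)) := by
      rw [Real.exp_neg, Real.exp_neg]
      field_simp
    rw [postPi, ← hZ, ← hwT]
    rw [← h2]
    exact h1
  have hCeq : -(2 * D + (4 + 2 * c) / β) * s * Real.log p = -(C * s * lp) := by
    rw [hC, hlp]; ring
  constructor
  · rw [hCeq]; exact hmain
  · have hπpos : 0 < postPi X Y β D s That :=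
      lt_of_lt_of_le (by positivity) hmain
    rw [one_div, Real.log_inv]
    have h3 : Real.exp (-(1 + C * s * lp)) ≤ postPi X Y β D s That := by
      have he : Real.exp (-(1 + C * s * lp)) = Real.exp (-1) * Real.exp (-(C * s * lp)) := by
        rw [← Real.exp_add]; ring_nf
      rw [he]; exact hmain
    have h4 := (Real.le_log_iff_exp_le hπpos).2 h3
    have h5 : (2 * D + (4 + 2 * c) / β) * s * Real.log p = C * s * lp := by
      rw [hC, hlp]
    linarith
end
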